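/- Let β > 0, β ≠ 1, t_min > 0, D > t_min, 0 ≤ τ_est ≤ τ_kill with t_min ≤ D − τ_est, and let r ≥ 1 be an integer with β·r > 1. Let T_1, X_2, ..., X_{r+1} be mutually independent Pareto(t_min, β) random variables. Define the random variable M = T_1 on the event {T_1 ≤ D}, and M = τ_est + r·(τ_kill − τ_est) + min(T_1 − τ_est, X_2, ..., X_{r+1}) on the event {T_1 > D}. Then E[M] = E1·(1 − (t_min/D)^β) + E2·(t_min/D)^β, where E1 = t_min·D·β·(t_min^{β−1} − D^{β−1})/((1 − β)·(D^β − t_min^β)) and E2 = τ_est + r·(τ_kill − τ_est) + t_min/(β·r − 1) − t_min^{β·r}/((β·r − 1)·(D − τ_est)^{β·r − 1}) + ∫_{D−τ_est}^{∞} (D/(ω + τ_est))^β·(t_min/ω)^{β·r} dω + t_min. -/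

import Mathlib

open MeasureTheory ProbabilityTheory Set

lemma fin_lt_iInf {ι : Type*} [Finite ι] [Nonempty ι] (f : ι → ℝ) (a : ℝ) :
    a < (⨅ k, f k) ↔ ∀ k, a < f k := by
  obtain ⟨i₀, hi₀⟩ := Finite.exists_min f
  have hbdd : BddBelow (Set.range f) := (Set.finite_range f).bddBelow
  have h : (⨅ k, f k) = f i₀ := le_antisymm (ciInf_le hbdd i₀) (le_ciInf hi₀)
  rw [h]; exact ⟨fun h k => lt_of_lt_of_le h (hi₀ k), fun h => h i₀⟩

/-- A real random variable `X` is Pareto(`tmin`, `β`): `P(X > t) = (tmin/t)^β` for `t ≥ tmin`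
and `P(X > t) = 1` for `t < tmin`. -/
def IsPareto {Ω : Type*} [MeasurableSpace Ω] (μ : Measure Ω) (X : Ω → ℝ)
    (tmin β : ℝ) : Prop :=
  Measurable X ∧
    (∀ t : ℝ, tmin ≤ t → μ {ω | t < X ω} = ENNReal.ofReal ((tmin / t) ^ β)) ∧
    (∀ t : ℝ, t < tmin → μ {ω | t < X ω} = 1)

lemma pareto_ae_le {Ω : Type*} [MeasurableSpace Ω] {μ : Measure Ω} [IsProbabilityMeasure μ]
    {X : Ω → ℝ} {tmin β : ℝ} (h : IsPareto μ X tmin β) :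
    ∀ᵐ ω ∂μ, tmin ≤ X ω := by
  have h0 : ∀ t, t < tmin → μ {ω | X ω ≤ t} = 0 := by
    intro t ht
    have hm : MeasurableSet {ω | t < X ω} := h.1 measurableSet_Ioi
    have hc : μ {ω | t < X ω}ᶜ = 0 := by
      rw [measure_compl hm (measure_ne_top μ _), h.2.2 t ht, measure_univ, tsub_self]
    simpa only [compl_setOf, not_lt] using hc
  rw [ae_iff]
  have hsub : {ω | ¬ tmin ≤ X ω} ⊆ ⋃ n : ℕ, {ω | X ω ≤ tmin - 1/(n+1)} := by
    intro ω hω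
    simp only [mem_setOf_eq, not_le] at hω
    obtain ⟨n, hn⟩ := exists_nat_one_div_lt (sub_pos.mpr hω)
    exact mem_iUnion.2 ⟨n, by simp only [mem_setOf_eq]; linarith⟩
  refine measure_mono_null hsub (measure_iUnion_null fun n => h0 _ ?_)
  have : (0:ℝ) < 1/((n:ℝ)+1) := by positivity
  linarith

lemma joint_meas {Ω : Type*} [MeasurableSpace Ω] (μ : Measure Ω) {r : ℕ}
    (T1 : Ω → ℝ) (X : Fin r → Ω → ℝ)
    (hindep : iIndepFun (Fin.cons T1 X : Fin (r + 1) → Ω → ℝ) μ)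
    (a t : ℝ) :
    μ ({ω | a < T1 ω} ∩ ⋂ k, {ω | t < X k ω})
      = μ {ω | a < T1 ω} * ∏ k, μ {ω | t < X k ω} := by
  classical
  set sets : Fin (r + 1) → Set ℝ := Fin.cons (Ioi a) (fun _ => Ioi t) with hsets
  have key := hindep.measure_inter_preimage_eq_mul Finset.univ
    (sets := sets)
    (fun i _ => by
      induction i using Fin.cases <;> simp [hsets, measurableSet_Ioi])
  have hset : (⋂ i ∈ Finset.univ, ((Fin.cons T1 X : Fin (r + 1) → Ω → ℝ) i) ⁻¹' sets i)
      = {ω | a < T1 ω} ∩ ⋂ k, {ω | t < X k ω} := by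
    ext ω
    simp only [Finset.mem_univ, Set.iInter_true, Set.mem_iInter, Set.mem_inter_iff,
      Set.mem_preimage, Set.mem_setOf_eq, Set.mem_Ioi]
    constructor
    · intro h
      exact ⟨by simpa [hsets] using h 0, fun k => by simpa [hsets] using h k.succ⟩
    · rintro ⟨h0, hk⟩ i
      induction i using Fin.cases with
      | zero => simpa [hsets] using h0
      | succ k => simpa [hsets] using hk k
  have hprod : (∏ i ∈ Finset.univ, μ (((Fin.cons T1 X : Fin (r + 1) → Ω → ℝ) i) ⁻¹' sets i))
      = μ {ω | a < T1 ω} * ∏ k, μ {ω | t < X k ω} := by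
    rw [Fin.prod_univ_succ]
    simp only [hsets, Fin.cons_zero, Fin.cons_succ]
    rfl
  rw [hset, hprod] at key
  exact key

lemma integrableOn_Ioc_rpow_neg (a b γ : ℝ) (h0 : 0 < a) :
    IntegrableOn (fun s : ℝ => s ^ (-γ)) (Ioc a b) := by
  rcases le_or_gt a b with hab | hab
  · refine (ContinuousOn.integrableOn_Icc ?_).mono_set Ioc_subset_Icc_self
    exact ContinuousOn.rpow_const continuousOn_id
      (fun x hx => Or.inl (ne_of_gt (lt_of_lt_of_le h0 hx.1)))
  · rw [Ioc_eq_empty (not_lt.mpr hab.le)]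
    exact integrableOn_empty

lemma int_Ioc_rpow_neg (a b γ : ℝ) (h0 : 0 < a) (hab : a ≤ b) (hγ : γ ≠ 1) :
    ∫ s in Ioc a b, s ^ (-γ) = (b ^ (1 - γ) - a ^ (1 - γ)) / (1 - γ) := by
  rw [← intervalIntegral.integral_of_le hab]
  have hne : -γ ≠ -1 := by intro h; apply hγ; linarith
  have h0m : (0:ℝ) ∉ Set.uIcc a b := by
    rw [Set.mem_uIcc]; push_neg
    exact ⟨fun h => absurd h (not_le.mpr h0), fun h => absurd h (not_le.mpr (h0.trans_le hab))⟩
  rw [integral_rpow (Or.inr ⟨hne, h0m⟩)]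
  have : -γ + 1 = 1 - γ := by ring
  rw [this]

lemma final_algebra (tmin D τ c I A B C E q β : ℝ)
    (htm : tmin ≠ 0) (hD : D ≠ 0) (hDτ : D - τ ≠ 0)
    (hA : A ≠ 0) (hB : B ≠ 0) (hBA : B - A ≠ 0) (hC : C ≠ 0) (hE : E ≠ 0)
    (hβ : 1 - β ≠ 0) (hq : q - 1 ≠ 0) :
    (tmin * (1 - A/B) + A * ((D * B⁻¹ - tmin * A⁻¹) / (1 - β)) - (A/B) * (D - tmin))
      + (A/B) * c
      + (tmin * (A/B) + (A/B) * (E * (((D - τ) * C⁻¹ - tmin * E⁻¹) / (1 - q))) + (A/B) * I)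
    = (tmin * D * β * (A/tmin - B/D) / ((1 - β) * (B - A))) * (1 - A/B)
      + (c + tmin/(q-1) - E/((q-1) * (C/(D-τ))) + I + tmin) * (A/B) := by
  have h1q : 1 - q ≠ 0 := fun h => hq (by linarith [h])
  field_simp
  ring

set_option maxHeartbeats 2000000 in
/-- paper's Theorem 4, expected machine running time per task under
Speculative-Restart: the machine time `M` equals `T₁` if `T₁ ≤ D`, and otherwise
`τ_est + r·(τ_kill − τ_est) + min(T₁ − τ_est, X₂, ..., X_{r+1})`; then
`E[M] = E1·(1 − (tmin/D)^β) + E2·(tmin/D)^β` with `E1`, `E2` as in the paper. -/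
theorem expected_time_speculative_restart
    {Ω : Type*} [MeasurableSpace Ω] (μ : Measure Ω) [IsProbabilityMeasure μ]
    (r : ℕ) (hr : 1 ≤ r) (tmin β D τest τkill : ℝ)
    (htmin : 0 < tmin) (hβ : 0 < β) (hβ1 : β ≠ 1) (hD : tmin < D)
    (hτest : 0 ≤ τest) (hτ : τest ≤ τkill) (h1 : tmin ≤ D - τest)
    (hβr : 1 < β * (r : ℝ))
    (T1 : Ω → ℝ) (X : Fin r → Ω → ℝ)
    (hindep : iIndepFun
      (Fin.cons T1 X : Fin (r + 1) → Ω → ℝ) μ)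
    (hT1 : IsPareto μ T1 tmin β)
    (hX : ∀ k, IsPareto μ (X k) tmin β)
    (M : Ω → ℝ)
    (hM : ∀ ω, M ω = if T1 ω ≤ D then T1 ω
      else τest + (r : ℝ) * (τkill - τest) + min (T1 ω - τest) (⨅ k, X k ω)) :
    ∫ ω, M ω ∂μ
      = (tmin * D * β * (tmin ^ (β - 1) - D ^ (β - 1))
            / ((1 - β) * (D ^ β - tmin ^ β))) * (1 - (tmin / D) ^ β)
        + (τest + (r : ℝ) * (τkill - τest)
            + tmin / (β * (r : ℝ) - 1)
            - tmin ^ (β * (r : ℝ)) / ((β * (r : ℝ) - 1) * (D - τest) ^ (β * (r : ℝ) - 1))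
            + (∫ x in Set.Ioi (D - τest), (D / (x + τest)) ^ β * (tmin / x) ^ (β * (r : ℝ)))
            + tmin) * (tmin / D) ^ β := by
  classical
  haveI : Nonempty (Fin r) := ⟨⟨0, hr⟩⟩
  have hmT : Measurable T1 := hT1.1
  have hmX : ∀ k, Measurable (X k) := fun k => (hX k).1
  have hDpos : 0 < D := htmin.trans hD
  have hDτ : 0 < D - τest := lt_of_lt_of_le htmin h1
  have hrpos : (0:ℝ) < r := by exact_mod_cast hr
  set q : ℝ := β * (r : ℝ) with hq
  have hqpos : 0 < q := by positivity
  have hq1 : 1 < q := hβr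
  set p : ℝ := (tmin / D) ^ β with hp
  have hppos : 0 < p := Real.rpow_pos_of_pos (by positivity) β
  have hple : p ≤ 1 := Real.rpow_le_one (by positivity)
    (by rw [div_le_one hDpos]; exact hD.le) hβ.le
  set c : ℝ := τest + (r:ℝ) * (τkill - τest) with hc
  have survT : ∀ a : ℝ, tmin ≤ a → μ {ω | a < T1 ω} = ENNReal.ofReal ((tmin/a)^β) := hT1.2.1
  have survT' : ∀ a : ℝ, a < tmin → μ {ω | a < T1 ω} = 1 := hT1.2.2
  have survD : μ {ω | D < T1 ω} = ENNReal.ofReal p := survT D hD.le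
  set W : Ω → ℝ := fun ω => ⨅ k, X k ω with hWdef
  set f : Ω → ℝ := fun ω => if T1 ω ≤ D then T1 ω else 0 with hfdef
  set g : Ω → ℝ := fun ω => if D < T1 ω then c else 0 with hgdef
  set V : Ω → ℝ := fun ω => if D < T1 ω then min (T1 ω - τest) (W ω) else 0 with hVdef
  have hmW : Measurable W := Measurable.iInf hmX
  have hmf : Measurable f :=
    Measurable.ite (measurableSet_le hmT measurable_const) hmT measurable_const
  have hmg : Measurable g :=
    Measurable.ite (measurableSet_lt measurable_const hmT) measurable_const measurable_const
  have hmV : Measurable V :=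
    Measurable.ite (measurableSet_lt measurable_const hmT)
      ((hmT.sub measurable_const).min hmW) measurable_const
  have haeT : ∀ᵐ ω ∂μ, tmin ≤ T1 ω := pareto_ae_le hT1
  have haeX : ∀ᵐ ω ∂μ, ∀ k, tmin ≤ X k ω := ae_all_iff.2 fun k => pareto_ae_le (hX k)
  have haeW : ∀ᵐ ω ∂μ, tmin ≤ W ω := haeX.mono fun ω h => le_ciInf h
  have hfnn : 0 ≤ᵐ[μ] f := by
    filter_upwards [haeT] with ω hω
    show (0:ℝ) ≤ f ω
    rw [hfdef]
    by_cases hh : T1 ω ≤ D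
    · simp only [if_pos hh]; linarith
    · simp only [if_neg hh]; exact le_rfl
  have hVnn : 0 ≤ᵐ[μ] V := by
    filter_upwards [haeT, haeW] with ω h1' h2'
    show (0:ℝ) ≤ V ω
    rw [hVdef]
    by_cases hh : D < T1 ω
    · simp only [if_pos hh, le_min_iff]
      constructor <;> linarith
    · simp only [if_neg hh]; exact le_rfl
  -- decomposition
  have hMsum : ∀ ω, M ω = f ω + g ω + V ω := by
    intro ω
    rw [hM ω, hfdef, hgdef, hVdef]
    simp only
    by_cases hh : T1 ω ≤ D
    · rw [if_pos hh, if_pos hh, if_neg (not_lt.mpr hh), if_neg (not_lt.mpr hh)]; ring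
    · rw [if_neg hh, if_neg hh, if_pos (not_le.mp hh), if_pos (not_le.mp hh), hc, hWdef]; ring
  -- g part
  have hgind : g = Set.indicator {ω | D < T1 ω} (fun _ => c) := by
    ext ω
    rw [hgdef, Set.indicator_apply]
    simp only [mem_setOf_eq]
  have hDmeas : MeasurableSet {ω | D < T1 ω} := measurableSet_lt measurable_const hmT
  have hig : Integrable g μ := by
    rw [hgind]; exact (integrable_const c).indicator hDmeas
  have hgval : ∫ ω, g ω ∂μ = c * p := by
    rw [hgind, integral_indicator_const c hDmeas, measureReal_def, survD,
      ENNReal.toReal_ofReal hppos.le, smul_eq_mul, mul_comm]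
  -- f part
  have hif : Integrable f μ := by
    refine Integrable.mono' (integrable_const D) hmf.aestronglyMeasurable ?_
    filter_upwards [haeT] with ω hω
    show ‖f ω‖ ≤ D
    rw [hfdef]
    by_cases hh : T1 ω ≤ D
    · simp only [if_pos hh]
      rw [Real.norm_eq_abs, abs_of_nonneg (le_trans htmin.le hω)]; exact hh
    · simp only [if_neg hh, norm_zero]; exact hDpos.le
  set Gf : ℝ → ℝ := fun s => if s ≤ tmin then 1 - p else if s ≤ D then (tmin/s)^β - p else 0
    with hGfdef
  have hsetf : ∀ s : ℝ, 0 < s → {ω | s < f ω} = {ω | s < T1 ω} \ {ω | D < T1 ω} := by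
    intro s hs
    ext ω
    simp only [mem_setOf_eq, mem_diff, not_lt, hfdef]
    by_cases hh : T1 ω ≤ D
    · rw [if_pos hh]; exact ⟨fun h => ⟨h, hh⟩, fun h => h.1⟩
    · rw [if_neg hh]
      constructor
      · intro h; linarith
      · rintro ⟨-, h2'⟩; exact absurd h2' hh
  have hGf : ∀ s : ℝ, 0 < s → μ {ω | s < f ω} = ENNReal.ofReal (Gf s) := by
    intro s hs
    rw [hsetf s hs, hGfdef]
    simp only
    by_cases h2 : s ≤ D
    · have hsub : {ω | D < T1 ω} ⊆ {ω | s < T1 ω} := fun ω hω => lt_of_le_of_lt h2 hω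
      rw [measure_diff hsub hDmeas.nullMeasurableSet (measure_ne_top μ _), survD]
      by_cases h1' : s ≤ tmin
      · have hμs : μ {ω | s < T1 ω} = 1 := by
          rcases eq_or_lt_of_le h1' with he | hl
          · rw [he, survT tmin le_rfl, div_self htmin.ne', Real.one_rpow, ENNReal.ofReal_one]
          · exact survT' s hl
        rw [if_pos h1', hμs, ENNReal.ofReal_sub _ hppos.le, ENNReal.ofReal_one]
      · rw [if_neg h1', if_pos h2, survT s (le_of_not_ge h1'),
          ENNReal.ofReal_sub _ hppos.le]
    · push_neg at h2
      have hemp : {ω | s < T1 ω} \ {ω | D < T1 ω} = ∅ := by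
        ext ω
        simp only [mem_diff, mem_setOf_eq, mem_empty_iff_false, iff_false, not_and, not_not]
        intro h
        exact h2.trans h
      rw [hemp, if_neg (by linarith : ¬ s ≤ tmin), if_neg (not_le.mpr h2), measure_empty,
        ENNReal.ofReal_zero]
  have hGfnn : ∀ s ∈ Ioi (0:ℝ), 0 ≤ Gf s := by
    intro s hs
    rw [hGfdef]
    simp only
    by_cases h1' : s ≤ tmin
    · rw [if_pos h1']; linarith
    · rw [if_neg h1']
      by_cases h2 : s ≤ D
      · rw [if_pos h2]
        have : p ≤ (tmin/s)^β := by
          apply Real.rpow_le_rpow (by positivity)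
          · apply div_le_div_of_nonneg_left htmin.le (mem_Ioi.mp hs) h2
          · exact hβ.le
        linarith
      · rw [if_neg h2]
  have hi1 : IntegrableOn Gf (Ioc (0:ℝ) tmin) := by
    have hcst : IntegrableOn (fun _ : ℝ => 1 - p) (Ioc (0:ℝ) tmin) volume :=
      integrableOn_const measure_Ioc_lt_top.ne
    refine hcst.congr_fun ?_ measurableSet_Ioc
    intro s hs
    rw [hGfdef]
    exact (if_pos hs.2).symm
  have heq2 : EqOn (fun s : ℝ => tmin^β * s^(-β) - p) Gf (Ioc tmin D) := by
    intro s hs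
    rw [hGfdef]
    simp only
    rw [if_neg (not_le.mpr hs.1), if_pos hs.2]
    have hspos : 0 < s := htmin.trans hs.1
    rw [Real.div_rpow htmin.le hspos.le, Real.rpow_neg hspos.le, div_eq_mul_inv]
  have hi2 : IntegrableOn Gf (Ioc tmin D) := by
    refine IntegrableOn.congr_fun ?_ heq2 measurableSet_Ioc
    exact ((integrableOn_Ioc_rpow_neg tmin D β htmin).const_mul _).sub
      (integrableOn_const measure_Ioc_lt_top.ne)
  have hi3 : IntegrableOn Gf (Ioi D) := by
    refine IntegrableOn.congr_fun (integrableOn_zero) ?_ measurableSet_Ioi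
    intro s hs
    rw [hGfdef]
    simp only [Pi.zero_apply]
    rw [if_neg (by linarith [mem_Ioi.mp hs] : ¬ s ≤ tmin),
      if_neg (not_le.mpr (mem_Ioi.mp hs))]
  have v1 : ∫ s in Ioc (0:ℝ) tmin, Gf s = tmin * (1 - p) := by
    rw [setIntegral_congr_fun measurableSet_Ioc
      (fun s hs => by rw [hGfdef]; exact if_pos hs.2 : EqOn Gf (fun _ => 1 - p) (Ioc 0 tmin))]
    rw [setIntegral_const, measureReal_def, Real.volume_Ioc, smul_eq_mul, sub_zero,
      ENNReal.toReal_ofReal htmin.le]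
  have v2 : ∫ s in Ioc tmin D, Gf s
      = tmin^β * ((D^(1-β) - tmin^(1-β))/(1-β)) - p*(D-tmin) := by
    rw [← setIntegral_congr_fun measurableSet_Ioc heq2]
    rw [integral_sub (((integrableOn_Ioc_rpow_neg tmin D β htmin).const_mul _))
      (integrableOn_const measure_Ioc_lt_top.ne)]
    rw [setIntegral_const, measureReal_def, Real.volume_Ioc, smul_eq_mul,
      ENNReal.toReal_ofReal (by linarith : 0 ≤ D - tmin)]
    rw [MeasureTheory.integral_const_mul, int_Ioc_rpow_neg tmin D β htmin hD.le hβ1]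
    ring
  have v3 : ∫ s in Ioi D, Gf s = 0 := by
    rw [setIntegral_congr_fun measurableSet_Ioi
      (fun s hs => by
        rw [hGfdef]
        simp only
        rw [if_neg (by linarith [mem_Ioi.mp hs] : ¬ s ≤ tmin),
          if_neg (not_le.mpr (mem_Ioi.mp hs))] : EqOn Gf (fun _ => (0:ℝ)) (Ioi D))]
    simp
  have hfval : ∫ ω, f ω ∂μ
      = tmin * (1 - p) + (tmin^β * ((D^(1-β) - tmin^(1-β))/(1-β)) - p*(D-tmin)) := by
    rw [hif.integral_eq_integral_meas_lt hfnn]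
    have hcong : ∫ s in Ioi (0:ℝ), μ.real {a | s < f a} = ∫ s in Ioi (0:ℝ), Gf s :=
      setIntegral_congr_fun measurableSet_Ioi fun s hs => by
        rw [measureReal_def, hGf s hs, ENNReal.toReal_ofReal (hGfnn s hs)]
    rw [hcong]
    have hi23 : IntegrableOn Gf (Ioi tmin) := by
      rw [← Ioc_union_Ioi_eq_Ioi hD.le]; exact hi2.union hi3
    rw [← Ioc_union_Ioi_eq_Ioi htmin.le,
      setIntegral_union (Ioc_disjoint_Ioi le_rfl) measurableSet_Ioi hi1 hi23,
      ← Ioc_union_Ioi_eq_Ioi hD.le,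
      setIntegral_union (Ioc_disjoint_Ioi le_rfl) measurableSet_Ioi hi2 hi3,
      v1, v2, v3]
    ring
  -- V part
  have survX : ∀ k, ∀ t : ℝ, tmin ≤ t →
      μ {ω | t < X k ω} = ENNReal.ofReal ((tmin/t)^β) := fun k => (hX k).2.1
  have survX' : ∀ k, ∀ t : ℝ, t < tmin → μ {ω | t < X k ω} = 1 := fun k => (hX k).2.2
  have prodX : ∀ s : ℝ, tmin ≤ s →
      (∏ k, μ {ω | s < X k ω}) = ENNReal.ofReal ((tmin/s)^q) := by
    intro s hs
    have hspos : 0 < s := htmin.trans_le hs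
    have : (∏ k, μ {ω | s < X k ω}) = (ENNReal.ofReal ((tmin/s)^β))^r := by
      rw [Finset.prod_congr rfl (fun k _ => survX k s hs), Finset.prod_const,
        Finset.card_univ, Fintype.card_fin]
    rw [this, ← ENNReal.ofReal_pow (by positivity)]
    congr 1
    rw [← Real.rpow_natCast ((tmin/s)^β) r, ← Real.rpow_mul (by positivity)]
  have prodX1 : ∀ s : ℝ, s < tmin → (∏ k, μ {ω | s < X k ω}) = 1 := by
    intro s hs
    rw [Finset.prod_congr rfl (fun k _ => survX' k s hs), Finset.prod_const_one]
  have hVset : ∀ s : ℝ, 0 < s → {ω | s < V ω}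
      = {ω | max D (s + τest) < T1 ω} ∩ ⋂ k, {ω | s < X k ω} := by
    intro s hs
    ext ω
    simp only [mem_setOf_eq, mem_inter_iff, mem_iInter, hVdef]
    by_cases hh : D < T1 ω
    · rw [if_pos hh, lt_inf_iff, max_lt_iff]
      constructor
      · rintro ⟨h1', h2'⟩
        exact ⟨⟨hh, by linarith⟩, (fin_lt_iInf (fun k => X k ω) s).mp h2'⟩
      · rintro ⟨⟨-, h2'⟩, h3'⟩
        exact ⟨by linarith, (fin_lt_iInf (fun k => X k ω) s).mpr h3'⟩
    · rw [if_neg hh]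
      constructor
      · intro h
        exact absurd h (not_lt.mpr hs.le)
      · rintro ⟨hmx, -⟩
        exact absurd ((le_max_left D (s+τest)).trans_lt hmx) hh
  set GV : ℝ → ℝ := fun s => if s ≤ tmin then p else if s ≤ D - τest then p * (tmin/s)^q
      else (tmin/(s+τest))^β * (tmin/s)^q with hGVdef
  have hGV : ∀ s : ℝ, 0 < s → μ {ω | s < V ω} = ENNReal.ofReal (GV s) := by
    intro s hs
    rw [hVset s hs, joint_meas μ T1 X hindep _ s, hGVdef]
    simp only
    by_cases hs2 : s ≤ D - τest
    · have hmax : max D (s + τest) = D := max_eq_left (by linarith)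
      rw [hmax, survD]
      by_cases hs1 : s ≤ tmin
      · rw [if_pos hs1]
        rcases eq_or_lt_of_le hs1 with he | hl
        · rw [he] at *
          rw [prodX tmin le_rfl, div_self htmin.ne', Real.one_rpow, ENNReal.ofReal_one,
            mul_one]
        · rw [prodX1 s hl, mul_one]
      · rw [if_neg hs1, if_pos hs2, prodX s (le_of_not_ge hs1),
          ← ENNReal.ofReal_mul hppos.le]
    · push_neg at hs2
      have hs1 : ¬ s ≤ tmin := by push_neg; linarith
      have hmax : max D (s + τest) = s + τest := max_eq_right (by linarith)
      rw [if_neg hs1, if_neg (not_le.mpr hs2), hmax, survT _ (by linarith),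
        prodX s (by linarith), ← ENNReal.ofReal_mul (by positivity)]
  have hGVnn : ∀ s ∈ Ioi (0:ℝ), 0 ≤ GV s := by
    intro s hs
    have hs0 : 0 < s := mem_Ioi.mp hs
    rw [hGVdef]
    simp only
    by_cases hs1 : s ≤ tmin
    · rw [if_pos hs1]; exact hppos.le
    · rw [if_neg hs1]
      by_cases hs2 : s ≤ D - τest
      · rw [if_pos hs2]; positivity
      · rw [if_neg hs2]; positivity
  have hqne1 : q ≠ 1 := by linarith
  -- piece 1
  have hi1' : IntegrableOn GV (Ioc (0:ℝ) tmin) := by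
    have hcst : IntegrableOn (fun _ : ℝ => p) (Ioc (0:ℝ) tmin) volume :=
      integrableOn_const measure_Ioc_lt_top.ne
    refine hcst.congr_fun ?_ measurableSet_Ioc
    intro s hs
    rw [hGVdef]
    exact (if_pos hs.2).symm
  have v1' : ∫ s in Ioc (0:ℝ) tmin, GV s = tmin * p := by
    rw [setIntegral_congr_fun measurableSet_Ioc
      (fun s hs => by rw [hGVdef]; exact if_pos hs.2 : EqOn GV (fun _ => p) (Ioc 0 tmin))]
    rw [setIntegral_const, measureReal_def, Real.volume_Ioc, smul_eq_mul, sub_zero,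
      ENNReal.toReal_ofReal htmin.le]
  -- piece 2
  have heq2' : EqOn (fun s : ℝ => (p * tmin^q) * s^(-q)) GV (Ioc tmin (D - τest)) := by
    intro s hs
    have hspos : 0 < s := htmin.trans hs.1
    rw [hGVdef]
    simp only
    rw [if_neg (not_le.mpr hs.1), if_pos hs.2,
      Real.div_rpow htmin.le hspos.le, Real.rpow_neg hspos.le]
    ring
  have hi2' : IntegrableOn GV (Ioc tmin (D - τest)) := by
    refine IntegrableOn.congr_fun ?_ heq2' measurableSet_Ioc
    exact (integrableOn_Ioc_rpow_neg tmin (D - τest) q htmin).const_mul _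
  have v2' : ∫ s in Ioc tmin (D - τest), GV s
      = p * (tmin^q * (((D - τest)^(1-q) - tmin^(1-q))/(1-q))) := by
    rw [← setIntegral_congr_fun measurableSet_Ioc heq2', MeasureTheory.integral_const_mul,
      int_Ioc_rpow_neg tmin (D - τest) q htmin h1 hqne1]
    ring
  -- piece 3 (tail)
  have heq3' : EqOn (fun s : ℝ => p * ((D/(s+τest))^β * (tmin/s)^q)) GV (Ioi (D - τest)) := by
    intro s hs
    have hs' : D - τest < s := mem_Ioi.mp hs
    have hspos : 0 < s := htmin.trans_le (h1.trans hs'.le)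
    have hsτ : 0 < s + τest := by linarith
    rw [hGVdef]
    simp only
    rw [if_neg (by push_neg; linarith : ¬ s ≤ tmin), if_neg (not_le.mpr hs')]
    have hsplit : tmin/(s+τest) = tmin/D * (D/(s+τest)) := by
      field_simp
    rw [hsplit, Real.mul_rpow (by positivity) (by positivity), hp]
    ring
  have htail0 : IntegrableOn (fun s : ℝ => (D/(s+τest))^β * (tmin/s)^q) (Ioi (D - τest)) := by
    refine Integrable.mono'
      (g := fun s : ℝ => (D/tmin)^β * (tmin^q * s^(-q)))
      (((integrableOn_Ioi_rpow_of_lt (by linarith : -q < -1) hDτ).const_mul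
        (tmin^q)).const_mul ((D/tmin)^β)) ?_ ?_
    · exact (((Real.continuous_rpow_const hβ.le).measurable.comp
          (measurable_const.div (measurable_id.add_const τest))).mul
        ((Real.continuous_rpow_const hqpos.le).measurable.comp
          (measurable_const.div measurable_id))).aestronglyMeasurable
    · rw [ae_restrict_iff' measurableSet_Ioi]
      refine ae_of_all _ fun s hs => ?_
      have hs' : D - τest < s := mem_Ioi.mp hs
      have hspos : 0 < s := htmin.trans_le (h1.trans hs'.le)
      have hsτ : tmin ≤ s + τest := by linarith
      have hf1 : (0:ℝ) ≤ (D/(s+τest))^β := by positivity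
      have hf2 : (0:ℝ) ≤ (tmin/s)^q := by positivity
      rw [Real.norm_eq_abs, abs_of_nonneg (mul_nonneg hf1 hf2)]
      have hb1 : (D/(s+τest))^β ≤ (D/tmin)^β :=
        Real.rpow_le_rpow (by positivity)
          (div_le_div_of_nonneg_left hDpos.le htmin hsτ) hβ.le
      have hb2 : (tmin/s)^q = tmin^q * s^(-q) := by
        rw [Real.div_rpow htmin.le hspos.le, Real.rpow_neg hspos.le, div_eq_mul_inv]
      rw [hb2] at hf2 ⊢
      exact mul_le_mul_of_nonneg_right hb1 hf2
  have hi3' : IntegrableOn GV (Ioi (D - τest)) := by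
    refine IntegrableOn.congr_fun (htail0.const_mul p) heq3' measurableSet_Ioi
  have v3' : ∫ s in Ioi (D - τest), GV s
      = p * ∫ x in Ioi (D - τest), (D/(x+τest))^β * (tmin/x)^q := by
    rw [← setIntegral_congr_fun measurableSet_Ioi heq3', MeasureTheory.integral_const_mul]
  -- integrability of V and its integral
  have hGVint : IntegrableOn GV (Ioi (0:ℝ)) := by
    rw [← Ioc_union_Ioi_eq_Ioi htmin.le]
    refine hi1'.union ?_
    rw [← Ioc_union_Ioi_eq_Ioi h1]
    exact hi2'.union hi3'
  have hlint : ∫⁻ s in Ioi (0:ℝ), μ {a | s < V a}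
      = ENNReal.ofReal (∫ s in Ioi (0:ℝ), GV s) := by
    rw [ofReal_integral_eq_lintegral_ofReal hGVint
      ((ae_restrict_iff' measurableSet_Ioi).2 (ae_of_all _ hGVnn))]
    exact setLIntegral_congr_fun_ae measurableSet_Ioi (ae_of_all _ fun s hs => hGV s hs)
  have hiV : Integrable V μ := by
    refine ⟨hmV.aestronglyMeasurable, ?_⟩
    rw [hasFiniteIntegral_iff_ofReal hVnn,
      lintegral_eq_lintegral_meas_lt μ hVnn hmV.aemeasurable, hlint]
    exact ENNReal.ofReal_lt_top
  have hVval : ∫ ω, V ω ∂μ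
      = tmin * p + p * (tmin^q * (((D - τest)^(1-q) - tmin^(1-q))/(1-q)))
        + p * ∫ x in Ioi (D - τest), (D/(x+τest))^β * (tmin/x)^q := by
    rw [hiV.integral_eq_integral_meas_lt hVnn]
    have hcong : ∫ s in Ioi (0:ℝ), μ.real {a | s < V a} = ∫ s in Ioi (0:ℝ), GV s :=
      setIntegral_congr_fun measurableSet_Ioi fun s hs => by
        rw [measureReal_def, hGV s hs, ENNReal.toReal_ofReal (hGVnn s hs)]
    rw [hcong]
    have hi23' : IntegrableOn GV (Ioi tmin) := by
      rw [← Ioc_union_Ioi_eq_Ioi h1]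
      exact hi2'.union hi3'
    rw [← Ioc_union_Ioi_eq_Ioi htmin.le,
      setIntegral_union (Ioc_disjoint_Ioi le_rfl) measurableSet_Ioi hi1' hi23',
      ← Ioc_union_Ioi_eq_Ioi h1,
      setIntegral_union (Ioc_disjoint_Ioi le_rfl) measurableSet_Ioi hi2' hi3',
      v1', v2', v3']
    ring
  -- assemble
  have hsum : ∫ ω, M ω ∂μ = (∫ ω, f ω ∂μ) + (∫ ω, g ω ∂μ) + ∫ ω, V ω ∂μ := by
    simp only [hMsum]
    have h1' : ∫ ω, (f ω + g ω) + V ω ∂μ = (∫ ω, f ω + g ω ∂μ) + ∫ ω, V ω ∂μ :=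
      integral_add (hif.add hig) hiV
    rw [h1', integral_add hif hig]
  rw [hsum, hfval, hgval, hVval]
  have e1 : tmin^(β-1) = tmin^β/tmin := by rw [Real.rpow_sub htmin, Real.rpow_one]
  have e2 : D^(β-1) = D^β/D := by rw [Real.rpow_sub hDpos, Real.rpow_one]
  have e3 : D^(1-β) = D/D^β := by rw [Real.rpow_sub hDpos, Real.rpow_one]
  have e4 : tmin^(1-β) = tmin/tmin^β := by rw [Real.rpow_sub htmin, Real.rpow_one]
  have e5 : (D-τest)^(1-q) = (D-τest)/(D-τest)^q := by rw [Real.rpow_sub hDτ, Real.rpow_one]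
  have e6 : tmin^(1-q) = tmin/tmin^q := by rw [Real.rpow_sub htmin, Real.rpow_one]
  have e7 : (D-τest)^(q-1) = (D-τest)^q/(D-τest) := by rw [Real.rpow_sub hDτ, Real.rpow_one]
  have e8 : p = tmin^β/D^β := by rw [hp, Real.div_rpow htmin.le hDpos.le]
  rw [e1, e2, e3, e4, e5, e6, e7, e8]
  have hABlt : tmin^β < D^β := Real.rpow_lt_rpow htmin.le hD hβ
  have hA0 : tmin^β ≠ 0 := (Real.rpow_pos_of_pos htmin β).ne'
  have hB0 : D^β ≠ 0 := (Real.rpow_pos_of_pos hDpos β).ne'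
  have hE0 : tmin^q ≠ 0 := (Real.rpow_pos_of_pos htmin q).ne'
  have hC0 : (D-τest)^q ≠ 0 := (Real.rpow_pos_of_pos hDτ q).ne'
  have hBA0 : D^β - tmin^β ≠ 0 := sub_ne_zero.mpr hABlt.ne'
  have h1β0 : 1 - β ≠ 0 := fun h => hβ1 (by linarith)
  have hq10 : q - 1 ≠ 0 := by intro h; exact absurd (by linarith : q = 1) hqne1
  have h1q0 : 1 - q ≠ 0 := fun h => hqne1 (by linarith)
  have htm0 : tmin ≠ 0 := htmin.ne'
  have hD0' : D ≠ 0 := hDpos.ne'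
  have hDτ0 : D - τest ≠ 0 := hDτ.ne'
  field_simp
  ring
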